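/- Let A₁ ⊆ F_p with 1 < |A₁| < p^{1/2}, and suppose a₁, a₂, b₁, b₂ ∈ A₁ satisfy a₁ ≠ a₂ and (b₁-b₂)/(a₁-a₂) + 1 ∉ (A₁-A₁)/(A₁-A₁). Then for every A′ ⊆ A₁ with |A′| ≥ |A₁|/2, |(a₁-a₂)A′ + (a₁-a₂)A′ + (b₁-b₂)A′| ≥ c|A₁|² for an absolute constant c > 0. -/
import Mathlib


open Finset Pointwise

theorem glibichuk_konyagin_expansion :
    ∃ c : ℝ, 0 < c ∧
      ∀ (p : ℕ) [Fact p.Prime], ∀ (A₁ : Finset (ZMod p)),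
        1 < A₁.card → A₁.card ^ 2 < p →
        ∀ a₁ ∈ A₁, ∀ a₂ ∈ A₁, ∀ b₁ ∈ A₁, ∀ b₂ ∈ A₁, a₁ ≠ a₂ →
        (b₁ - b₂) / (a₁ - a₂) + 1 ∉
          {r : ZMod p | ∃ x ∈ A₁, ∃ y ∈ A₁, ∃ z ∈ A₁, ∃ w ∈ A₁,
            z ≠ w ∧ r = (x - y) / (z - w)} →
        ∀ A' ⊆ A₁, (A₁.card : ℝ) / 2 ≤ A'.card →
          c * A₁.card ^ 2 ≤
            (((a₁ - a₂) • A' + (a₁ - a₂) • A' + (b₁ - b₂) • A').card : ℝ) := by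
  refine ⟨1/4, by norm_num, ?_⟩
  intro p _ A₁ h1 h2 a₁ ha₁ a₂ ha₂ b₁ hb₁ b₂ hb₂ hne hnot A' hsub hcard
  set l := a₁ - a₂ with hl
  set m := b₁ - b₂ with hm
  have hl0 : l ≠ 0 := sub_ne_zero.mpr hne
  set S := l • A' + l • A' + m • A' with hS
  have hinj : Set.InjOn (fun q : ZMod p × ZMod p => l*q.1 + l*q.2 + m*q.2)
      ((A' ×ˢ A' : Finset (ZMod p × ZMod p)) : Set (ZMod p × ZMod p)) := by
    rintro ⟨x, y⟩ hxy ⟨x', y'⟩ hxy' heq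
    simp only [Finset.coe_product, Set.mem_prod, Finset.mem_coe] at hxy hxy'
    obtain ⟨hx, hy⟩ := hxy
    obtain ⟨hx', hy'⟩ := hxy'
    simp only at heq
    by_cases hyy : y = y'
    · subst hyy
      have hxx : x = x' := by
        have h' : l * x = l * x' := by linear_combination heq
        exact mul_left_cancel₀ hl0 h'
      simp [hxx]
    · exfalso
      apply hnot
      refine ⟨x, hsub hx, x', hsub hx', y', hsub hy', y, hsub hy,
        fun h => hyy h.symm, ?_⟩
      have hyy' : y' - y ≠ 0 := sub_ne_zero.mpr (fun h => hyy h.symm)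
      field_simp
      linear_combination -heq
  have himg : ∀ q ∈ (A' ×ˢ A' : Finset (ZMod p × ZMod p)),
      l*q.1 + l*q.2 + m*q.2 ∈ S := by
    rintro ⟨x, y⟩ hq
    rw [Finset.mem_product] at hq
    exact Finset.add_mem_add
      (Finset.add_mem_add (Finset.smul_mem_smul_finset hq.1)
        (Finset.smul_mem_smul_finset hq.2))
      (Finset.smul_mem_smul_finset hq.2)
  have hle : (A' ×ˢ A').card ≤ S.card :=
    Finset.card_le_card_of_injOn _ himg hinj
  rw [Finset.card_product] at hle
  have hA' : (A'.card : ℝ) * A'.card ≤ S.card := by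
    exact_mod_cast hle
  have h0 : (0:ℝ) ≤ (A₁.card : ℝ) / 2 := by positivity
  nlinarith [hcard, hA', h0]
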